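/- Let (e_n)_{n∈ℕ} denote the standard unit vectors in the space of bounded real sequences with the supremum norm. Let x_1 = 2e_1, let x_n = e_1 + (1 + 2^{−n})e_n for n ≥ 2, and let M = {0} ∪ {x_n : n ∈ ℕ} with the induced metric, so that d(x_1, 0) = 2 and d(x_n, 0) = 1 + 2^{−n} for n ≥ 2. Define f : M → ℝ by f(p) = d(p, 0). Then for every n ≥ 3 and every 1-Lipschitz function g : M → ℝ with g(0) = 0 and Σ_{k=1}^∞ 2^{−k}·g(x_k)/d(x_k, 0) > 1 − 2^{−2n}, one has sup_{p∈M} |f(p) − g(p)| ≤ 2^{−(n−2)}. -/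

import Mathlib

/-- The quantitative estimate of Example 3.8 of the paper, for the metric space
`M = {0} ∪ {xₙ : n ≥ 1} ⊆ c₀` with `x₁ = 2e₁` and `xₙ = e₁ + (1 + 2⁻ⁿ)eₙ` for `n ≥ 2`
(described here by its distances), showing that `μ = Σ 2⁻ⁿ (δ_{xₙ} − δ_0)/d(xₙ,0)` is a
point of Fréchet differentiability with derivative `f = d(·,0)`. -/
theorem stmt_13 {M : Type*} [MetricSpace M] (z : M) (x : ℕ → M)
    (hx1 : dist (x 1) z = 2)
    (hxn : ∀ n : ℕ, 2 ≤ n → dist (x n) z = 1 + 1 / 2 ^ n)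
    (hx1n : ∀ n : ℕ, 2 ≤ n → dist (x 1) (x n) = 1 + 1 / 2 ^ n)
    (hxmn : ∀ m n : ℕ, 2 ≤ m → 2 ≤ n → m ≠ n →
      dist (x m) (x n) = 1 + 1 / 2 ^ min m n)
    (hM : ∀ p : M, p = z ∨ ∃ n : ℕ, 1 ≤ n ∧ p = x n) :
    ∀ n : ℕ, 3 ≤ n → ∀ g : M → ℝ, LipschitzWith 1 g → g z = 0 →
      1 - 1 / 2 ^ (2 * n) <
        ∑' k : ℕ, (1 / 2 ^ (k + 1)) * (g (x (k + 1)) / dist (x (k + 1)) z) →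
      ∀ p : M, |dist p z - g p| ≤ 1 / 2 ^ (n - 2) := by
  intro n hn g hg hgz hsum p
  -- basic distance bounds
  have hd : ∀ m : ℕ, 1 ≤ m → 1 ≤ dist (x m) z ∧ dist (x m) z ≤ 2 := by
    intro m hm
    rcases eq_or_lt_of_le hm with h | h
    · rw [← h, hx1]; norm_num
    · have h2 : 2 ≤ m := h
      rw [hxn m h2]
      have h1 : (1:ℝ)/2^m ≤ 1 := by
        rw [div_le_one (by positivity)]
        exact one_le_pow₀ (by norm_num)
      have h0 : (0:ℝ) < 1/2^m := by positivity
      constructor <;> linarith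
  have hdpos : ∀ m : ℕ, 1 ≤ m → (0:ℝ) < dist (x m) z := fun m hm => lt_of_lt_of_le one_pos (hd m hm).1
  -- Lipschitz bound
  have hgle : ∀ m : ℕ, 1 ≤ m → |g (x m)| ≤ dist (x m) z := by
    intro m hm
    have := hg.dist_le_mul (x m) z
    rwa [Real.dist_eq, hgz, sub_zero, NNReal.coe_one, one_mul] at this
  set a : ℕ → ℝ := fun k => g (x (k + 1)) / dist (x (k + 1)) z with ha
  have habs : ∀ k, |a k| ≤ 1 := by
    intro k
    rw [ha]
    simp only [abs_div]
    rw [div_le_one (lt_of_lt_of_le (hdpos (k+1) (by omega)) (le_abs_self _))]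
    calc |g (x (k+1))| ≤ dist (x (k+1)) z := hgle (k+1) (by omega)
      _ ≤ |dist (x (k+1)) z| := le_abs_self _
  -- summability
  have hc : Summable (fun k : ℕ => (1/2^(k+1) : ℝ)) := by
    have h := (summable_geometric_of_lt_one (by norm_num : (0:ℝ) ≤ 1/2) (by norm_num)).mul_left (1/2 : ℝ)
    refine h.congr fun k => ?_
    rw [one_div_pow, pow_succ]; ring
  have hca : Summable (fun k : ℕ => (1/2^(k+1) : ℝ) * a k) := by
    apply Summable.of_norm
    apply Summable.of_nonneg_of_le (fun k => norm_nonneg _) _ hc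
    intro k
    rw [norm_mul, Real.norm_eq_abs, Real.norm_eq_abs, abs_of_nonneg (by positivity : (0:ℝ) ≤ 1/2^(k+1))]
    calc (1/2^(k+1) : ℝ) * |a k| ≤ (1/2^(k+1) : ℝ) * 1 :=
          mul_le_mul_of_nonneg_left (habs k) (by positivity)
      _ = 1/2^(k+1) := mul_one _
  have htc : ∑' k : ℕ, (1/2^(k+1) : ℝ) = 1 := by
    have h : ∀ k : ℕ, (1/2^(k+1) : ℝ) = (1/2) * (1/2)^k := by
      intro k; rw [one_div_pow, pow_succ]; ring
    rw [tsum_congr h, tsum_mul_left, tsum_geometric_of_lt_one (by norm_num) (by norm_num)]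
    norm_num
  -- key per-index estimate
  have hb : Summable (fun k : ℕ => (1/2^(k+1) : ℝ) * (1 - a k)) := by
    have := hc.sub hca
    refine this.congr fun k => ?_
    ring
  have htb : ∑' k : ℕ, (1/2^(k+1) : ℝ) * (1 - a k) < 1/2^(2*n) := by
    have heq : ∑' k : ℕ, (1/2^(k+1) : ℝ) * (1 - a k)
        = (∑' k : ℕ, (1/2^(k+1) : ℝ)) - ∑' k : ℕ, (1/2^(k+1) : ℝ) * a k := by
      rw [← Summable.tsum_sub hc hca]
      exact tsum_congr fun k => by ring
    rw [heq, htc]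
    linarith
  have hkey : ∀ j : ℕ, (1/2^(j+1) : ℝ) * (1 - a j) < 1/2^(2*n) := by
    intro j
    refine lt_of_le_of_lt ?_ htb
    apply Summable.le_tsum hb j
    intro k _
    have := habs k
    have h1 : a k ≤ 1 := le_of_abs_le (habs k)
    have h2 : (0:ℝ) ≤ 1/2^(k+1) := by positivity
    nlinarith
  -- pointwise lower bound on g
  have hlow : ∀ m : ℕ, 1 ≤ m → dist (x m) z - g (x m) < 2^(m+1) / 2^(2*n) := by
    intro m hm
    have hk := hkey (m - 1)
    have hm1 : m - 1 + 1 = m := by omega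
    rw [hm1] at hk
    have haval : a (m - 1) = g (x m) / dist (x m) z := by
      simp only [ha]
      rw [hm1]
    rw [haval] at hk
    have h2m : (0:ℝ) < 2^m := by positivity
    have hdm := hdpos m hm
    have hd2 := (hd m hm).2
    have h1 : (1 : ℝ) - g (x m) / dist (x m) z < 2^m * (1/2^(2*n)) := by
      have h3 := mul_lt_mul_of_pos_left hk h2m
      rw [← mul_assoc] at h3
      have h4 : (2:ℝ)^m * (1/2^m) = 1 := by field_simp
      rwa [h4, one_mul] at h3
    have h5 : dist (x m) z * (1 - g (x m) / dist (x m) z) = dist (x m) z - g (x m) := by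
      field_simp
    have h6 := mul_lt_mul_of_pos_left h1 hdm
    rw [h5] at h6
    have h7 : dist (x m) z * (2^m * (1/2^(2*n))) ≤ 2 * (2^m * (1/2^(2*n))) := by
      apply mul_le_mul_of_nonneg_right hd2 (by positivity)
    calc dist (x m) z - g (x m) < dist (x m) z * (2^m * (1/2^(2*n))) := h6
      _ ≤ 2 * (2^m * (1/2^(2*n))) := h7
      _ = 2^(m+1) / 2^(2*n) := by rw [pow_succ]; ring
  have hup : ∀ m : ℕ, 1 ≤ m → g (x m) ≤ dist (x m) z := fun m hm =>
    le_trans (le_abs_self _) (hgle m hm)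
  -- the target bound: 1/2^(n-2) = 4/2^n
  have htarget : (1/2^(n-2) : ℝ) = 4/2^n := by
    have h2 : (2:ℝ)^(n-2) * 4 = 2^n := by
      calc (2:ℝ)^(n-2) * 4 = 2^(n-2) * 2^2 := by norm_num
        _ = 2^(n-2+2) := (pow_add 2 (n-2) 2).symm
        _ = 2^n := by rw [Nat.sub_add_cancel (by omega : 2 ≤ n)]
    rw [← h2]
    rw [div_eq_div_iff (by positivity) (by positivity)]
    ring
  -- case analysis on p
  rcases hM p with hp | ⟨m, hm, hp⟩
  · rw [hp, dist_self, hgz, sub_zero, abs_zero]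
    positivity
  · rw [hp]
    have hnonneg : 0 ≤ dist (x m) z - g (x m) := by linarith [hup m hm]
    rw [abs_of_nonneg hnonneg, htarget]
    rcases le_or_gt m n with hmn | hmn
    · -- small m
      have h1 := hlow m hm
      have h2 : (2:ℝ)^(m+1) / 2^(2*n) ≤ 4/2^n := by
        rw [div_le_div_iff₀ (by positivity) (by positivity)]
        have h3 : (2:ℝ)^(m+1) * 2^n = 2^(m+1+n) := (pow_add 2 (m+1) n).symm
        have h4 : (4:ℝ) * 2^(2*n) = 2^(2*n+2) := by rw [pow_add]; ring
        rw [h3, h4]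
        exact pow_le_pow_right₀ (by norm_num) (by omega)
      linarith
    · -- large m: use x 1
      have hm2 : 2 ≤ m := by omega
      have hdist1m := hx1n m hm2
      have hlip := hg.dist_le_mul (x 1) (x m)
      rw [Real.dist_eq, NNReal.coe_one, one_mul, hdist1m] at hlip
      have hg1 : g (x 1) - (1 + 1/2^m) ≤ g (x m) := by
        have h := le_trans (le_abs_self (g (x 1) - g (x m))) hlip
        linarith
      have hlow1 := hlow 1 le_rfl
      rw [hx1] at hlow1
      have hdm : dist (x m) z = 1 + 1/2^m := hxn m hm2
      have e1 : (2:ℝ)/2^m ≤ 1/2^n := by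
        rw [div_le_div_iff₀ (by positivity) (by positivity)]
        have h3 : (2:ℝ) * 2^n = 2^(n+1) := by rw [pow_add]; ring
        rw [h3, one_mul]
        exact pow_le_pow_right₀ (by norm_num) (by omega)
      have e2 : (2:ℝ)^(1+1)/2^(2*n) ≤ 1/2^n := by
        rw [div_le_div_iff₀ (by positivity) (by positivity)]
        have h3 : (2:ℝ)^(1+1) * 2^n = 2^(n+2) := by rw [pow_add, pow_add]; ring
        rw [h3, one_mul]
        exact pow_le_pow_right₀ (by norm_num) (by omega)
      rw [hdm]
      have e0 : (2:ℝ)/2^m = 2*(1/2^m) := by ring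
      have e4 : (4:ℝ)/2^n = 4*(1/2^n) := by ring
      have h0 : (0:ℝ) ≤ 1/2^n := by positivity
      linarith
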